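/- Let q = 2^m. The trinomial X^3(X^{3(q−1)} + X^{(q−1)} + 1) and the trinomial X^{11}(X^{10(q−1)} + X^{4(q−1)} + 1) are quasi-multiplicatively inequivalent over F_{q^2}: there is no integer d with gcd(d, q^2−1)=1 such that {11d, (4q+7)d, (10q+1)d} = {3, 3q, q+2} as multisets modulo q^2−1 (for q > 4). -/

import Mathlib

/-- For `q = 2^m` with `q > 4`, there is no unit `d` modulo `q^2-1` such that the
multisets `{11d, (4q+7)d, (10q+1)d}` and `{3, 3q, q+2}` coincide modulo `q^2-1`;
hence `X^3(X^{3(q-1)}+X^{q-1}+1)` and `X^{11}(X^{10(q-1)}+X^{4(q-1)}+1)` are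
quasi-multiplicatively inequivalent over `F_{q^2}`. -/
theorem stmt_13 (m q : ℕ) (hq : q = 2 ^ m) (hq4 : 4 < q) :
    ¬ ∃ d : ℕ, Nat.gcd d (q ^ 2 - 1) = 1 ∧
      Multiset.map (· % (q ^ 2 - 1))
          ({11 * d, (4 * q + 7) * d, (10 * q + 1) * d} : Multiset ℕ) =
        Multiset.map (· % (q ^ 2 - 1)) ({3, 3 * q, q + 2} : Multiset ℕ) := by
  rintro ⟨d, -, h⟩
  have hm3 : 3 ≤ m := by
    by_contra hc
    push_neg at hc
    interval_cases m <;> norm_num at hq <;> omega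
  have h8 : 8 ∣ q := by
    rw [hq]
    exact (by norm_num : (8:ℕ) = 2^3) ▸ pow_dvd_pow 2 hm3
  have hdvd : (q + 1) ∣ (q ^ 2 - 1) := by
    refine ⟨q - 1, ?_⟩
    obtain ⟨r, rfl⟩ : ∃ r, q = r + 5 := ⟨q - 5, by omega⟩
    rw [show (r+5)^2 = r^2+10*r+25 by ring, show (r+5+1)*(r+5-1) = r^2+10*r+24 by
      rw [show r+5-1 = r+4 from rfl]; ring]
    omega
  haveI : NeZero (q+1) := ⟨by omega⟩
  set R := ZMod (q+1)
  have hN : ((q^2 - 1 : ℕ) : R) = 0 := (ZMod.natCast_eq_zero_iff _ _).mpr hdvd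
  have key : ∀ a : ℕ, ((a % (q^2-1) : ℕ) : R) = (a : R) := by
    intro a
    conv_rhs => rw [← Nat.mod_add_div a (q^2-1)]
    push_cast
    rw [Nat.cast_mul, hN]
    ring
  have E := congrArg (Multiset.map (Nat.cast : ℕ → R)) h
  simp only [Multiset.map_map, Function.comp, key, Multiset.insert_eq_cons,
    Multiset.map_cons, Multiset.map_singleton] at E
  push_cast +zetaDelta at E
  have hqc : (q : R) = -1 := by
    have h0 : ((q+1 : ℕ) : R) = 0 := by
      exact_mod_cast ZMod.natCast_self (q+1)
    push_cast at h0
    exact eq_neg_of_add_eq_zero_left h0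
  have hsum := congrArg Multiset.sum E
  simp only [Multiset.insert_eq_cons, Multiset.sum_cons, Multiset.sum_singleton] at hsum
  rw [hqc] at hsum
  have hmem : ((q : R) + 2) ∈ ((3:R) ::ₘ 3*(q:R) ::ₘ {(q:R)+2}) := by simp
  rw [← E] at hmem
  simp only [Multiset.mem_cons, Multiset.mem_singleton] at hmem
  rw [hqc] at hmem
  rcases hmem with h1 | h1 | h1
  · have h0 : ((6:ℕ) : R) = 0 := by push_cast; linear_combination (-11)*hsum - 5*h1
    have := (ZMod.natCast_eq_zero_iff 6 (q+1)).mp h0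
    exact absurd (Nat.le_of_dvd (by norm_num) this) (by omega)
  · have h0 : ((2:ℕ) : R) = 0 := by push_cast; linear_combination 3*hsum + 5*h1
    have := (ZMod.natCast_eq_zero_iff 2 (q+1)).mp h0
    exact absurd (Nat.le_of_dvd (by norm_num) this) (by omega)
  · have h0 : ((14:ℕ) : R) = 0 := by push_cast; linear_combination (-9)*hsum + 5*h1
    have hd14 := (ZMod.natCast_eq_zero_iff 14 (q+1)).mp h0
    have hle := Nat.le_of_dvd (by norm_num) hd14
    have hq8 : q = 8 := by omega
    rw [hq8] at hd14
    norm_num at hd14
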